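/- arXiv:1109.0814 — 2 statements merged into one kernel-verified Lean document; each statement's English description precedes it below -/
import Mathlib

section
/- Let $B$ be the unit ball of $\mathbb{C}^n$, $1<p<\infty$, $s>0$, and $\mu$ a positive Borel measure on $B$. If $\sup_{w \in B} \int_B \frac{(1-|w|^2)^s}{|1-\langle z,w\rangle|^{np+s}}\,d\mu(z) < \infty$, then there is a constant $C>0$ such that $\mu(Q_\delta(\xi)) \le C\,\delta^{np}$ for all $\xi \in S$ and $0<\delta<1$. -/
open MeasureTheory Metric Set

noncomputable section

/-- `C^n` as a Euclidean space. -/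
abbrev En (n : ℕ) := EuclideanSpace ℂ (Fin n)

instance En.measureSpace {n : ℕ} : MeasureSpace (En n) :=
  ⟨Measure.map (WithLp.toLp 2) (volume : Measure (Fin n → ℂ))⟩

/-- The Hermitian pairing of z and w. -/
def herm {n : ℕ} (z w : En n) : ℂ := ∑ j, z j * (starRingEnd ℂ) (w j)

/-- The Carleson box Q_delta(xi). -/
def Qbox {n : ℕ} (δ : ℝ) (ξ : En n) : Set (En n) :=
  {z | z ∈ Metric.ball (0 : En n) 1 ∧ ‖1 - herm z ξ‖ < δ}

lemma herm_smul {n : ℕ} (z ξ : En n) (c : ℝ) : herm z ((c:ℂ) • ξ) = (c:ℂ) * herm z ξ := by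
  unfold herm
  simp [Finset.mul_sum, mul_comm, mul_left_comm]

lemma qbox_measurable {n : ℕ} (δ : ℝ) (ξ : En n) : MeasurableSet (Qbox δ ξ) := by
  have happly : ∀ j : Fin n, Measurable fun z : En n => z j := fun j =>
    by fun_prop
  have hmeas : Measurable fun z : En n => ‖1 - herm z ξ‖ := by
    refine continuous_norm.measurable.comp ?_
    unfold herm
    exact Measurable.const_sub (Finset.measurable_sum _ fun j _ =>
      (happly j).mul_const _) _
  have hball : MeasurableSet (Metric.ball (0 : En n) 1) := by
    have heq : Metric.ball (0 : En n) 1 =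
        (fun z : En n => ‖z‖) ⁻¹' (Set.Iio 1) := by
      ext z; simp [mem_ball_zero_iff]
    rw [heq]
    have hnorm : Measurable fun z : En n => ‖z‖ := by
      simp only [EuclideanSpace.norm_eq]
      exact (Finset.measurable_sum _ fun j _ => ((happly j).norm.pow_const 2)).sqrt
    exact hnorm measurableSet_Iio
  exact hball.inter (hmeas measurableSet_Iio)

/-- Lemma 2.1, (iii) implies (i). -/
theorem stmt_1 (n : ℕ) (p : ℝ) (hp : 1 < p) (s : ℝ) (hs : 0 < s)
    (μ : Measure (En n)) (M : ℝ)
    (hμ : ∀ w ∈ Metric.ball (0 : En n) 1,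
      ∫⁻ z in Metric.ball (0 : En n) 1,
          ENNReal.ofReal ((1 - ‖w‖ ^ 2) ^ s /
            ‖1 - herm z w‖ ^ ((n : ℝ) * p + s)) ∂μ
        ≤ ENNReal.ofReal M) :
    ∃ C : ℝ, 0 < C ∧ ∀ ξ ∈ Metric.sphere (0 : En n) 1, ∀ δ : ℝ, 0 < δ → δ < 1 →
      μ (Qbox δ ξ) ≤ ENNReal.ofReal (C * δ ^ ((n : ℝ) * p)) := by
  set t : ℝ := (n : ℝ) * p + s with ht
  have ht0 : 0 ≤ t := by positivity
  refine ⟨(max M 0 + 1) * 3 ^ t, by positivity, ?_⟩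
  intro ξ hξ δ hδ0 hδ1
  have hξ1 : ‖ξ‖ = 1 := by simpa using hξ
  -- the test point
  set w : En n := ((1 - δ : ℝ) : ℂ) • ξ with hwdef
  have hwn : ‖w‖ = 1 - δ := by
    rw [hwdef, norm_smul, hξ1, mul_one, Complex.norm_real, Real.norm_eq_abs,
      abs_of_nonneg (by linarith : (0:ℝ) ≤ 1 - δ)]
  have hwball : w ∈ Metric.ball (0 : En n) 1 := by
    rw [mem_ball_zero_iff, hwn]; linarith
  set lb : ℝ := δ ^ s / (3 * δ) ^ t with hlb
  have h3δ : (0:ℝ) < 3 * δ := by linarith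
  have hlbpos : 0 < lb := by
    apply div_pos (Real.rpow_pos_of_pos hδ0 s) (Real.rpow_pos_of_pos h3δ t)
  -- pointwise lower bound on the box
  have hpt : ∀ z ∈ Qbox δ ξ, lb ≤
      (1 - ‖w‖ ^ 2) ^ s / ‖1 - herm z w‖ ^ t := by
    rintro z ⟨hz1, hz2⟩
    set h : ℂ := herm z ξ with hh
    have habsh : ‖h‖ < 1 + δ := by
      calc ‖h‖ = ‖1 - (1 - h)‖ := by ring_nf
        _ ≤ ‖(1:ℂ)‖ + ‖1 - h‖ := by
            simpa using norm_sub_le (1:ℂ) (1 - h)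
        _ < 1 + δ := by simp; linarith [hz2]
    have hherm : herm z w = ((1 - δ : ℝ) : ℂ) * h := herm_smul z ξ (1 - δ)
    have hkey : (1 : ℂ) - herm z w = (1 - h) + (δ : ℝ) * h := by
      rw [hherm]; push_cast; ring
    have hub : ‖1 - herm z w‖ ≤ 3 * δ := by
      rw [hkey]
      calc ‖(1 - h) + (δ : ℝ) * h‖
          ≤ ‖1 - h‖ + ‖(δ : ℝ) * h‖ := norm_add_le _ _
        _ = ‖1 - h‖ + δ * ‖h‖ := by
            rw [norm_mul]; simp [abs_of_pos hδ0]
        _ ≤ δ + δ * (1 + δ) := by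
            have := mul_le_mul_of_nonneg_left habsh.le hδ0.le
            linarith [hz2]
        _ ≤ 3 * δ := by nlinarith
    have hlow : 0 < ‖1 - herm z w‖ := by
      have h1 : ‖herm z w‖ ≤ (1 - δ) * (1 + δ) := by
        rw [hherm, norm_mul]
        simp only [Complex.norm_real, Real.norm_eq_abs, abs_of_nonneg (by linarith : (0:ℝ) ≤ 1 - δ)]
        exact mul_le_mul_of_nonneg_left habsh.le (by linarith)
      have h2 : 1 - ‖herm z w‖ ≤ ‖1 - herm z w‖ := by
        simpa using norm_sub_norm_le (1 : ℂ) (herm z w)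
      nlinarith
    have hbase : (0:ℝ) < 1 - ‖w‖ ^ 2 := by rw [hwn]; nlinarith
    have hnum : δ ^ s ≤ (1 - ‖w‖ ^ 2) ^ s := by
      apply Real.rpow_le_rpow hδ0.le _ hs.le
      rw [hwn]; nlinarith
    have hden : ‖1 - herm z w‖ ^ t ≤ (3 * δ) ^ t := by
      exact Real.rpow_le_rpow (norm_nonneg _) hub ht0
    exact div_le_div₀ (Real.rpow_nonneg hbase.le s) hnum
      (Real.rpow_pos_of_pos hlow t) hden
  -- integral lower bound
  have hQsub : Qbox δ ξ ⊆ Metric.ball (0 : En n) 1 := fun z hz => hz.1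
  have hchain : ENNReal.ofReal lb * μ (Qbox δ ξ) ≤ ENNReal.ofReal M := by
    calc ENNReal.ofReal lb * μ (Qbox δ ξ)
        = ∫⁻ _ in Qbox δ ξ, ENNReal.ofReal lb ∂μ := by
          rw [setLIntegral_const]
      _ ≤ ∫⁻ z in Qbox δ ξ,
            ENNReal.ofReal ((1 - ‖w‖ ^ 2) ^ s / ‖1 - herm z w‖ ^ t) ∂μ := by
          apply setLIntegral_mono' (qbox_measurable δ ξ)
          exact fun z hz => ENNReal.ofReal_le_ofReal (hpt z hz)
      _ ≤ ∫⁻ z in Metric.ball (0 : En n) 1,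
            ENNReal.ofReal ((1 - ‖w‖ ^ 2) ^ s / ‖1 - herm z w‖ ^ t) ∂μ :=
          lintegral_mono_set hQsub
      _ ≤ ENNReal.ofReal M := hμ w hwball
  -- conclude
  have ha : ENNReal.ofReal lb ≠ 0 := by
    simp [ENNReal.ofReal_eq_zero, not_le, hlbpos]
  rw [← ENNReal.mul_le_mul_iff_right ha ENNReal.ofReal_ne_top]
  calc ENNReal.ofReal lb * μ (Qbox δ ξ) ≤ ENNReal.ofReal M := hchain
    _ ≤ ENNReal.ofReal (lb * ((max M 0 + 1) * 3 ^ t * δ ^ ((n : ℝ) * p))) := by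
        apply ENNReal.ofReal_le_ofReal
        have hcalc : lb * ((max M 0 + 1) * 3 ^ t * δ ^ ((n : ℝ) * p)) = max M 0 + 1 := by
          rw [hlb, Real.mul_rpow (by norm_num) hδ0.le, ht,
            Real.rpow_add hδ0]
          have h3 : (0:ℝ) < (3:ℝ) ^ ((n : ℝ) * p + s) := Real.rpow_pos_of_pos (by norm_num) _
          have hd1 : (0:ℝ) < δ ^ ((n : ℝ) * p) := Real.rpow_pos_of_pos hδ0 _
          have hd2 : (0:ℝ) < δ ^ s := Real.rpow_pos_of_pos hδ0 _
          field_simp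
        rw [hcalc]
        exact le_trans (le_max_left M 0) (by linarith)
    _ = ENNReal.ofReal lb * ENNReal.ofReal ((max M 0 + 1) * 3 ^ t * δ ^ ((n : ℝ) * p)) := by
        rw [ENNReal.ofReal_mul hlbpos.le]
end
end

section
/- Let $\varphi$ be holomorphic on the unit ball $B$ of $\mathbb{C}^n$, $1<p<\infty$, $0\le\sigma<\infty$, $1+\sigma>n/p$. If the operator $U_\varphi f(z) = \int_0^1 \varphi(tz)\,Rf(tz)\,\frac{dt}{t}$ is bounded on the space $B_p^\sigma(B)$ normed by $\|g\|^p = \int_B |Rg(z)|^p(1-|z|^2)^{(1+\sigma)p-n-1}dv(z)$, then $\varphi$ is bounded on $B$. -/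
open MeasureTheory Metric Set
open scoped ENNReal NNReal

noncomputable section

/-- The radial derivative R f (z), i.e. the derivative of f at z in the direction z. -/
def radialDeriv {n : ℕ} (f : En n → ℂ) (z : En n) : ℂ := fderiv ℂ f z z

/-- The p-th power of the (m = 1) Besov-Sobolev seminorm. -/
def besov1 {n : ℕ} (p σ : ℝ) (g : En n → ℂ) : ℝ≥0∞ :=
  ∫⁻ z in Metric.ball (0 : En n) 1,
    ENNReal.ofReal (‖radialDeriv g z‖ ^ p *
      (1 - ‖z‖ ^ 2) ^ ((1 + σ) * p - n - 1)) ∂volume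

/-- The operator U_φ. -/
def Uop {n : ℕ} (φ f : En n → ℂ) (z : En n) : ℂ :=
  ∫ t in (0 : ℝ)..1, φ (t • z) * radialDeriv f (t • z) / t

/-- The Riemann-Stieltjes operator V_φ. -/
def Vop {n : ℕ} (φ f : En n → ℂ) (z : En n) : ℂ :=
  ∫ t in (0 : ℝ)..1, f (t • z) * radialDeriv φ (t • z) / t

open intervalIntegral Filter
open scoped Interval
open scoped Topology
set_option maxHeartbeats 1000000
set_option synthInstance.maxHeartbeats 400000

namespace Stmt17

instance borelEn {n : ℕ} : BorelSpace (En n) := inferInstanceAs (BorelSpace (PiLp 2 (fun _ : Fin n => ℂ)))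
instance haarEn {n : ℕ} : Measure.IsAddHaarMeasure (volume : Measure (En n)) :=
  (PiLp.continuousLinearEquiv 2 ℂ (fun _ : Fin n => ℂ)).symm.isAddHaarMeasure_map volume

variable {n : ℕ}

/-- Cauchy-estimate bound for the derivative of a holomorphic function on compact subballs. -/
lemma fderiv_bound (φ : En n → ℂ) (hφ : DifferentiableOn ℂ φ (ball (0 : En n) 1))
    {s : ℝ} (hs0 : 0 ≤ s) (hs : s < 1) :
    ∃ M : ℝ, 0 ≤ M ∧ ∀ x ∈ closedBall (0 : En n) s, ‖fderiv ℂ φ x‖ ≤ M := by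
  set s' : ℝ := (1 + s) / 2 with hs'def
  have hs'lt : s' < 1 := by simp [hs'def]; linarith
  have hss' : s < s' := by simp [hs'def]; linarith
  set R : ℝ := (1 - s) / 2 with hRdef
  have hR : 0 < R := by simp [hRdef]; linarith
  -- bound for φ on the compact ball of radius s'
  obtain ⟨Mp, hMp⟩ : ∃ C, ∀ y ∈ closedBall (0 : En n) s', ‖φ y‖ ≤ C := by
    refine (isCompact_closedBall _ _).exists_bound_of_continuousOn
      (hφ.continuousOn.mono ?_)
    exact fun y hy => mem_ball_zero_iff.2 (lt_of_le_of_lt (mem_closedBall_zero_iff.1 hy) hs'lt)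
  have hMp0 : 0 ≤ Mp := le_trans (norm_nonneg _) (hMp 0 (by simp [le_trans hs0 hss'.le]))
  refine ⟨Mp / R, by positivity, fun x hx => ?_⟩
  rw [mem_closedBall_zero_iff] at hx
  -- key: directional derivative estimate
  have key : ∀ v : En n, ‖v‖ = 1 → ‖fderiv ℂ φ x v‖ ≤ Mp / R := by
    intro v hv
    set g : ℂ → ℂ := fun w => φ (x + w • v) with hgdef
    have hmaps : ∀ w : ℂ, ‖w‖ ≤ R → x + w • v ∈ closedBall (0 : En n) s' := by
      intro w hw
      rw [mem_closedBall_zero_iff]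
      calc ‖x + w • v‖ ≤ ‖x‖ + ‖w • v‖ := norm_add_le _ _
        _ ≤ s + R := by
            rw [norm_smul, hv, mul_one]; exact add_le_add hx hw
        _ = s' := by rw [hRdef, hs'def]; ring
    have hgd : DifferentiableOn ℂ g (closedBall (0:ℂ) R) := by
      intro w hw
      rw [mem_closedBall_zero_iff] at hw
      have hmem : x + w • v ∈ ball (0 : En n) 1 :=
        mem_ball_zero_iff.2 (lt_of_le_of_lt (mem_closedBall_zero_iff.1 (hmaps w hw)) hs'lt)
      have h1 : DifferentiableAt ℂ φ (x + w • v) :=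
        (hφ (x + w • v) hmem).differentiableAt (isOpen_ball.mem_nhds hmem)
      have h2 : DifferentiableAt ℂ (fun w : ℂ => x + w • v) w := by
        apply DifferentiableAt.const_add
        exact (differentiableAt_id.smul_const v)
      exact (h1.comp w h2).differentiableWithinAt
    have hdc : DiffContOnCl ℂ g (ball (0:ℂ) R) :=
      DifferentiableOn.diffContOnCl (by rwa [closure_ball (0:ℂ) hR.ne'])
    have hsb : ∀ w ∈ sphere (0:ℂ) R, ‖g w‖ ≤ Mp := by
      intro w hw
      rw [mem_sphere_zero_iff_norm] at hw
      exact hMp _ (hmaps w hw.le)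
    have hderiv : ‖deriv g 0‖ ≤ Mp / R :=
      Complex.norm_deriv_le_of_forall_mem_sphere_norm_le hR hdc hsb
    have hchain : HasDerivAt g (fderiv ℂ φ x v) 0 := by
      have haff : HasDerivAt (fun w : ℂ => x + w • v) v 0 := by
        simpa using ((hasDerivAt_id (0:ℂ)).smul_const v).const_add x
      have hmem : x ∈ ball (0 : En n) 1 := mem_ball_zero_iff.2 (lt_of_le_of_lt hx (lt_trans hss' hs'lt))
      have hφx : HasFDerivAt φ (fderiv ℂ φ x) x :=
        ((hφ x hmem).differentiableAt (isOpen_ball.mem_nhds hmem)).hasFDerivAt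
      have hφx' : HasFDerivAt φ (fderiv ℂ φ x) ((fun w : ℂ => x + w • v) 0) := by
        simpa using hφx
      exact hφx'.comp_hasDerivAt 0 haff
    rw [← hchain.deriv]
    exact hderiv
  refine ContinuousLinearMap.opNorm_le_bound _ (by positivity) (fun v => ?_)
  rcases eq_or_ne v 0 with rfl | hv0
  · simp
  · have hnv : (0:ℝ) < ‖v‖ := norm_pos_iff.2 hv0
    have hu : ‖(‖v‖⁻¹ • v : En n)‖ = 1 := by
      rw [norm_smul, norm_inv, norm_norm, inv_mul_cancel₀ hnv.ne']
    have := key _ hu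
    have hrepr : fderiv ℂ φ x v = ‖v‖ • fderiv ℂ φ x (‖v‖⁻¹ • v) := by
      rw [← (fderiv ℂ φ x).map_smul_of_tower, smul_smul, mul_inv_cancel₀ hnv.ne', one_smul]
    rw [hrepr, norm_smul, norm_norm]
    calc ‖v‖ * ‖fderiv ℂ φ x (‖v‖⁻¹ • v)‖ ≤ ‖v‖ * (Mp / R) :=
          mul_le_mul_of_nonneg_left this hnv.le
      _ = Mp / R * ‖v‖ := mul_comm _ _


variable {n : ℕ}

def Ff (φ : En n → ℂ) (i : Fin n) (k : ℕ) (z : En n) : ℂ :=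
  z i * ∫ t in (0:ℝ)..1, (φ (t • z)) ^ k

lemma smul_mem_ball {z : En n} (hz : z ∈ ball (0 : En n) 1) {t : ℝ} (ht : |t| ≤ 1) :
    t • z ∈ ball (0 : En n) 1 := by
  rw [mem_ball_zero_iff] at hz ⊢
  rw [norm_smul, Real.norm_eq_abs]
  calc |t| * ‖z‖ ≤ 1 * ‖z‖ := mul_le_mul_of_nonneg_right ht (norm_nonneg _)
    _ < 1 := by simpa using hz

lemma contOn_pow (φ : En n → ℂ) (hφ : DifferentiableOn ℂ φ (ball (0 : En n) 1)) (k : ℕ)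
    (z : En n) :
    ContinuousOn (fun t : ℝ => (φ (t • z)) ^ k) {t : ℝ | t • z ∈ ball (0 : En n) 1} := by
  apply ContinuousOn.pow
  exact hφ.continuousOn.comp (by fun_prop) (fun t ht => ht)

lemma isOpen_slice (z : En n) : IsOpen {t : ℝ | t • z ∈ ball (0 : En n) 1} :=
  isOpen_ball.preimage (by fun_prop)

lemma Icc_subset_slice {z : En n} (hz : z ∈ ball (0 : En n) 1) :
    Icc (0:ℝ) 1 ⊆ {t : ℝ | t • z ∈ ball (0 : En n) 1} := by
  intro t ht
  exact smul_mem_ball hz (by rw [abs_of_nonneg ht.1]; exact ht.2)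

/-- Differentiability of the test functions. -/
lemma diffF (φ : En n → ℂ) (hφ : DifferentiableOn ℂ φ (ball (0 : En n) 1)) (i : Fin n) (k : ℕ) :
    ∀ z₀ ∈ ball (0 : En n) 1, DifferentiableAt ℂ (Ff φ i k) z₀ := by
  intro z₀ hz₀m
  have hz₀ : ‖z₀‖ < 1 := mem_ball_zero_iff.1 hz₀m
  set s : ℝ := (1 + ‖z₀‖) / 2 with hsdef
  have h0s : 0 ≤ s := by positivity
  have hs1 : s < 1 := by rw [hsdef]; linarith
  have hzs : ‖z₀‖ < s := by rw [hsdef]; linarith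
  set ε : ℝ := s - ‖z₀‖ with hεdef
  have hε : 0 < ε := by rw [hεdef]; linarith
  obtain ⟨M, hM0, hM⟩ := fderiv_bound φ hφ h0s hs1
  obtain ⟨Mp, hMp⟩ : ∃ C, ∀ y ∈ closedBall (0:En n) s, ‖φ y‖ ≤ C :=
    (isCompact_closedBall _ _).exists_bound_of_continuousOn (hφ.continuousOn.mono
      (fun y hy => mem_ball_zero_iff.2 (lt_of_le_of_lt (mem_closedBall_zero_iff.1 hy) hs1)))
  have hMp0 : 0 ≤ Mp := le_trans (norm_nonneg _) (hMp 0 (by simp [h0s]))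
  have hsm : ∀ (t : ℝ), |t| ≤ 1 → ∀ z ∈ ball z₀ ε, t • z ∈ closedBall (0:En n) s := by
    intro t ht z hz
    rw [mem_ball_iff_norm] at hz
    have hzn : ‖z‖ < s := by
      have h1 : ‖z‖ ≤ ‖z - z₀‖ + ‖z₀‖ := by
        calc ‖z‖ = ‖z - z₀ + z₀‖ := by rw [sub_add_cancel]
          _ ≤ ‖z - z₀‖ + ‖z₀‖ := norm_add_le _ _
      rw [hεdef] at hz
      linarith
    rw [mem_closedBall_zero_iff, norm_smul, Real.norm_eq_abs]
    nlinarith [abs_nonneg t, norm_nonneg z]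
  have hball : ∀ y ∈ closedBall (0:En n) s, y ∈ ball (0:En n) 1 := fun y hy =>
    mem_ball_zero_iff.2 (lt_of_le_of_lt (mem_closedBall_zero_iff.1 hy) hs1)
  set F' : En n → ℝ → (En n →L[ℂ] ℂ) := fun z t =>
    ((k:ℂ) * (φ (t • z)) ^ (k-1)) •
      ((fderiv ℂ φ (t • z)).comp ((t:ℂ) • ContinuousLinearMap.id ℂ (En n))) with hF'def
  have hLcoe : ∀ t : ℝ, (fun y : En n => t • y)
      = ⇑((t:ℂ) • ContinuousLinearMap.id ℂ (En n)) := by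
    intro t
    funext y
    simp [Complex.coe_smul]
  have hLnorm : ∀ t : ℝ, ‖((t:ℂ) • ContinuousLinearMap.id ℂ (En n))‖ ≤ |t| := by
    intro t
    refine ContinuousLinearMap.opNorm_le_bound _ (abs_nonneg t) (fun y => ?_)
    have h : ((t:ℂ) • ContinuousLinearMap.id ℂ (En n)) y = t • y := by
      rw [← hLcoe t]
    rw [h, norm_smul, Real.norm_eq_abs]
  have hdiff : ∀ t : ℝ, |t| ≤ 1 → ∀ z ∈ ball z₀ ε,
      HasFDerivAt (fun y : En n => (φ (t • y)) ^ k) (F' z t) z := by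
    intro t ht z hz
    have hmem : t • z ∈ ball (0:En n) 1 := hball _ (hsm t ht z hz)
    have hLd : HasFDerivAt (fun y : En n => t • y)
        ((t:ℂ) • ContinuousLinearMap.id ℂ (En n)) z := by
      rw [hLcoe t]
      exact ((t:ℂ) • ContinuousLinearMap.id ℂ (En n)).hasFDerivAt
    have hφd : HasFDerivAt φ (fderiv ℂ φ (t • z)) ((fun y : En n => t • y) z) :=
      ((hφ _ hmem).differentiableAt (isOpen_ball.mem_nhds hmem)).hasFDerivAt
    exact (hasDerivAt_pow k (φ (t • z))).comp_hasFDerivAt z (hφd.comp z hLd)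
  have hbd : ∀ t : ℝ, |t| ≤ 1 → ∀ z ∈ ball z₀ ε, ‖F' z t‖ ≤ (k : ℝ) * Mp ^ (k-1) * M := by
    intro t ht z hz
    have hmem : t • z ∈ closedBall (0:En n) s := hsm t ht z hz
    have h1 : ‖(k:ℂ) * (φ (t • z)) ^ (k-1)‖ ≤ (k:ℝ) * Mp ^ (k-1) := by
      have hk : ‖(k:ℂ)‖ = (k:ℝ) := by simp
      rw [norm_mul, norm_pow, hk]
      exact mul_le_mul_of_nonneg_left
        (pow_le_pow_left₀ (norm_nonneg _) (hMp _ hmem) _) (Nat.cast_nonneg k)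
    have h2 : ‖(fderiv ℂ φ (t • z)).comp ((t:ℂ) • ContinuousLinearMap.id ℂ (En n))‖ ≤ M := by
      calc ‖(fderiv ℂ φ (t • z)).comp ((t:ℂ) • ContinuousLinearMap.id ℂ (En n))‖
          ≤ ‖fderiv ℂ φ (t • z)‖ * ‖(t:ℂ) • ContinuousLinearMap.id ℂ (En n)‖ :=
            ContinuousLinearMap.opNorm_comp_le _ _
        _ ≤ M * 1 := by
            apply mul_le_mul (hM _ hmem) ((hLnorm t).trans ht) (norm_nonneg _) hM0
        _ = M := mul_one M
    calc ‖F' z t‖ ≤ ‖(k:ℂ) * (φ (t • z)) ^ (k-1)‖ * ‖(fderiv ℂ φ (t • z)).comp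
          ((t:ℂ) • ContinuousLinearMap.id ℂ (En n))‖ := ContinuousLinearMap.opNorm_smul_le _ _
      _ ≤ ((k:ℝ) * Mp ^ (k-1)) * M := mul_le_mul h1 h2 (norm_nonneg _) (by positivity)
  have habs : ∀ t : ℝ, t ∈ Ι (0:ℝ) 1 → |t| ≤ 1 := by
    intro t ht
    rw [uIoc_of_le (zero_le_one)] at ht
    rw [abs_of_pos ht.1]
    exact ht.2
  -- the dominated-derivative theorem
  have hG : DifferentiableAt ℂ (fun z : En n => ∫ t in (0:ℝ)..1, (φ (t • z)) ^ k) z₀ := by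
    have key := intervalIntegral.hasFDerivAt_integral_of_dominated_of_fderiv_le
      (𝕜 := ℂ) (μ := volume) (F := fun z t => (φ (t • z)) ^ k) (F' := F')
      (a := 0) (b := 1) (x₀ := z₀) (bound := fun _ => (k : ℝ) * Mp ^ (k-1) * M) (ball_mem_nhds z₀ hε) ?_ ?_ ?_ ?_ ?_ ?_
    · exact key.differentiableAt
    · -- hF_meas
      filter_upwards [ball_mem_nhds z₀ hε] with z hz
      have hsub : Ι (0:ℝ) 1 ⊆ {t : ℝ | t • z ∈ ball (0 : En n) 1} := by
        intro t ht
        exact hball _ (hsm t (habs t ht) z hz)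
      exact ((contOn_pow φ hφ k z).mono hsub).aestronglyMeasurable measurableSet_uIoc
    · -- hF_int
      apply ContinuousOn.intervalIntegrable
      rw [uIcc_of_le (zero_le_one)]
      exact (contOn_pow φ hφ k z₀).mono (Icc_subset_slice hz₀m)
    · -- hF'_meas
      have hsub : Ι (0:ℝ) 1 ⊆ {t : ℝ | t • z₀ ∈ ball (0 : En n) 1} := by
        intro t ht
        exact hball _ (hsm t (habs t ht) z₀ (mem_ball_self hε))
      have hc : AEStronglyMeasurable (fun t : ℝ => (k:ℂ) * (φ (t • z₀)) ^ (k-1))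
          (volume.restrict (Ι (0:ℝ) 1)) := by
        apply ContinuousOn.aestronglyMeasurable _ measurableSet_uIoc
        exact (continuousOn_const.mul ((contOn_pow φ hφ (k-1) z₀).mono hsub))
      have hT : AEStronglyMeasurable (fun t : ℝ => fderiv ℂ φ (t • z₀))
          (volume.restrict (Ι (0:ℝ) 1)) := by
        apply Measurable.aestronglyMeasurable
        exact (measurable_fderiv ℂ φ).comp (by fun_prop)
      have hL : AEStronglyMeasurable (fun t : ℝ => ((t:ℂ) • ContinuousLinearMap.id ℂ (En n)))
          (volume.restrict (Ι (0:ℝ) 1)) := by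
        apply Continuous.aestronglyMeasurable
        exact (Complex.continuous_ofReal).smul continuous_const
      have hTL := (ContinuousLinearMap.compL ℂ (En n) (En n) ℂ).aestronglyMeasurable_comp₂ hT hL
      exact (ContinuousLinearMap.lsmul ℂ ℂ).aestronglyMeasurable_comp₂ hc hTL
    · -- h_bound
      filter_upwards with t ht z hz
      exact hbd t (habs t ht) z hz
    · exact intervalIntegrable_const
    · -- h_diff
      filter_upwards with t ht z hz
      exact hdiff t (habs t ht) z hz
  have hproj : DifferentiableAt ℂ (fun z : En n => z i) z₀ :=
    (EuclideanSpace.proj i : En n →L[ℂ] ℂ).differentiableAt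
  unfold Ff
  exact hproj.mul hG

/-- The radial derivative of the test functions. -/
lemma radialF (φ : En n → ℂ) (hφ : DifferentiableOn ℂ φ (ball (0 : En n) 1)) (i : Fin n) (k : ℕ) :
    ∀ z ∈ ball (0 : En n) 1, radialDeriv (Ff φ i k) z = z i * (φ z) ^ k := by
  intro z hz
  rcases eq_or_ne z 0 with rfl | hz0
  · have h0 : ((0 : En n) : En n) i = 0 := rfl
    simp [radialDeriv, h0]
  have hzn : ‖z‖ < 1 := mem_ball_zero_iff.1 hz
  have hzpos : 0 < ‖z‖ := norm_pos_iff.2 hz0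
  have h1slice : (1:ℝ) ∈ {t : ℝ | t • z ∈ ball (0 : En n) 1} := by
    show (1:ℝ) • z ∈ ball (0 : En n) 1
    rwa [one_smul]
  set f : ℝ → ℂ := fun u => (φ (u • z)) ^ k with hfdef
  have hFd : DifferentiableAt ℂ (Ff φ i k) z := diffF φ hφ i k z hz
  -- first derivative computation
  have h1 : HasDerivAt (fun r : ℝ => Ff φ i k (r • z)) (radialDeriv (Ff φ i k) z) 1 := by
    have hsm : HasDerivAt (fun r : ℝ => r • z) z 1 := by
      simpa using (hasDerivAt_id (1:ℝ)).smul_const z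
    have hF' : HasFDerivAt (Ff φ i k) ((fderiv ℂ (Ff φ i k) z).restrictScalars ℝ)
        ((fun r : ℝ => r • z) 1) := by
      have := (hFd.hasFDerivAt).restrictScalars ℝ
      simpa using this
    have hcomp := hF'.comp_hasDerivAt 1 hsm
    exact hcomp
  -- second derivative computation
  have hii : IntervalIntegrable f volume 0 1 := by
    apply ContinuousOn.intervalIntegrable
    rw [uIcc_of_le (zero_le_one)]
    exact (contOn_pow φ hφ k z).mono (Icc_subset_slice hz)
  have hsmf : StronglyMeasurableAtFilter f (𝓝 1) volume :=
    ContinuousOn.stronglyMeasurableAtFilter (isOpen_slice z) (contOn_pow φ hφ k z) 1 h1slice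
  have hca : ContinuousAt f 1 :=
    (contOn_pow φ hφ k z).continuousAt ((isOpen_slice z).mem_nhds h1slice)
  have h2 : HasDerivAt (fun r : ℝ => ∫ u in (0:ℝ)..r, f u) (f 1) 1 :=
    intervalIntegral.integral_hasDerivAt_right hii hsmf hca
  have h3 : HasDerivAt (fun r : ℝ => z i * ∫ u in (0:ℝ)..r, f u) (z i * f 1) 1 :=
    h2.const_mul (z i)
  -- the two functions agree near 1
  have hU : {r : ℝ | 0 < r ∧ r • z ∈ ball (0 : En n) 1} ∈ 𝓝 (1:ℝ) := by
    apply IsOpen.mem_nhds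
    · exact isOpen_Ioi.inter (isOpen_slice z)
    · exact ⟨one_pos, h1slice⟩
  have heq : (fun r : ℝ => z i * ∫ u in (0:ℝ)..r, f u) =ᶠ[𝓝 (1:ℝ)]
      (fun r : ℝ => Ff φ i k (r • z)) := by
    filter_upwards [hU] with r hr
    obtain ⟨hr0, hrz⟩ := hr
    have hsub : ∀ t : ℝ, t • (r • z) = (t * r) • z := by
      intro t; rw [smul_smul]
    have hint : (∫ t in (0:ℝ)..1, (φ (t • (r • z))) ^ k) = r⁻¹ • ∫ u in (0:ℝ)..r, f u := by
      have : (∫ t in (0:ℝ)..1, (φ (t • (r • z))) ^ k) = ∫ t in (0:ℝ)..1, f (t * r) := by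
        apply intervalIntegral.integral_congr
        intro t _
        rw [hfdef]
        simp only [hsub]
      rw [this, intervalIntegral.integral_comp_mul_right f hr0.ne']
      norm_num
    have hri : (r • z) i = (r : ℂ) * z i := by
      simp [PiLp.smul_apply, Complex.real_smul]
    rw [Ff, hint, hri]
    rw [Complex.real_smul]
    push_cast
    have hrC : (r : ℂ) ≠ 0 := by exact_mod_cast hr0.ne'
    field_simp
  have h4 : HasDerivAt (fun r : ℝ => Ff φ i k (r • z)) (z i * f 1) 1 :=
    h3.congr_of_eventuallyEq heq.symm
  have := h1.unique h4
  rw [this, hfdef]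
  simp [one_smul]

/-- U_φ maps a test function to the next one. -/
lemma UopF (φ : En n → ℂ) (hφ : DifferentiableOn ℂ φ (ball (0 : En n) 1)) (i : Fin n) (k : ℕ) :
    ∀ z ∈ ball (0 : En n) 1, Uop φ (Ff φ i k) z = Ff φ i (k+1) z := by
  intro z hz
  have key : ∀ t : ℝ, t ∈ Ι (0:ℝ) 1 →
      φ (t • z) * radialDeriv (Ff φ i k) (t • z) / (t : ℂ)
        = z i * (φ (t • z)) ^ (k+1) := by
    intro t ht
    rw [uIoc_of_le (zero_le_one)] at ht
    have ht0 : 0 < t := ht.1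
    have hmem : t • z ∈ ball (0 : En n) 1 :=
      smul_mem_ball hz (by rw [abs_of_pos ht0]; exact ht.2)
    rw [radialF φ hφ i k _ hmem]
    have hti : (t • z) i = (t : ℂ) * z i := by
      simp [PiLp.smul_apply, Complex.real_smul]
    rw [hti]
    have htC : (t : ℂ) ≠ 0 := by exact_mod_cast ht0.ne'
    field_simp
    ring
  show (∫ t in (0:ℝ)..1, φ (t • z) * radialDeriv (Ff φ i k) (t • z) / t)
      = z i * ∫ t in (0:ℝ)..1, (φ (t • z)) ^ (k+1)
  rw [intervalIntegral.integral_congr_ae (Filter.Eventually.of_forall key),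
    intervalIntegral.integral_const_mul]


variable {n : ℕ}

lemma weight_lt_top (hn : 0 < n) {α : ℝ} (hα : -1 < α) :
    ∫⁻ z in ball (0:En n) 1, ENNReal.ofReal ((1 - ‖z‖ ^ 2) ^ α) ∂volume < ⊤ := by
  haveI : Nonempty (Fin n) := ⟨⟨0, hn⟩⟩
  haveI : Nontrivial (En n) := ⟨EuclideanSpace.single ⟨0,hn⟩ (1:ℂ), 0, by
    intro h
    have := congrArg (fun z : En n => z ⟨0,hn⟩) h
    simp [EuclideanSpace.single_apply] at this⟩
  set d : ℕ := Module.finrank ℝ (En n) with hd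
  have hd0 : 0 < d := Module.finrank_pos
  set V : ℝ≥0∞ := volume (ball (0:En n) 1) with hV
  have hVt : V ≠ ⊤ := measure_ball_lt_top.ne
  set A : ℕ → Set (En n) := fun j => {z : En n | 1 - (2⁻¹:ℝ)^j ≤ ‖z‖ ∧ ‖z‖ < 1 - (2⁻¹:ℝ)^(j+1)}
    with hA
  have hmeasA : ∀ j, MeasurableSet (A j) := by
    intro j
    have : A j = (fun z : En n => ‖z‖) ⁻¹' (Ico (1 - (2⁻¹:ℝ)^j) (1 - (2⁻¹:ℝ)^(j+1))) := rfl
    rw [this]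
    exact measurable_norm measurableSet_Ico
  -- covering
  have hcover : ball (0:En n) 1 ⊆ ⋃ j, A j := by
    intro z hz
    rw [mem_ball_zero_iff] at hz
    have hex : ∃ j : ℕ, ‖z‖ < 1 - (2⁻¹:ℝ)^(j+1) := by
      obtain ⟨j, hj⟩ := exists_pow_lt_of_lt_one (by linarith : (0:ℝ) < 1 - ‖z‖)
        (by norm_num : (2⁻¹:ℝ) < 1)
      exact ⟨j, by
        have : (2⁻¹:ℝ)^(j+1) ≤ (2⁻¹:ℝ)^j := by
          exact pow_le_pow_of_le_one (by norm_num) (by norm_num) (by omega)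
        linarith⟩
    classical
    set j := Nat.find hex with hj
    have h1 : ‖z‖ < 1 - (2⁻¹:ℝ)^(j+1) := Nat.find_spec hex
    have h2 : 1 - (2⁻¹:ℝ)^j ≤ ‖z‖ := by
      rcases Nat.eq_zero_or_pos j with hj0 | hjpos
      · rw [hj0]
        simp [norm_nonneg]
      · have := Nat.find_min hex (m := j - 1) (by omega)
        push_neg at this
        have hje : j - 1 + 1 = j := by omega
        rw [hje] at this
        exact this
    exact mem_iUnion.2 ⟨j, h2, h1⟩
  -- geometric data
  set ρ : ℝ := max ((2⁻¹:ℝ) ^ (α + 1)) 2⁻¹ with hρ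
  have hρ1 : ρ < 1 := by
    apply max_lt _ (by norm_num)
    exact Real.rpow_lt_one (by norm_num) (by norm_num) (by linarith)
  have hρ0 : (0:ℝ) ≤ ρ := le_trans (by norm_num) (le_max_right _ _)
  set E : ℝ := ((2⁻¹:ℝ) ^ (α:ℝ) + 1) * d with hE
  have h2a : (0:ℝ) < (2⁻¹:ℝ) ^ (α:ℝ) := Real.rpow_pos_of_pos (by norm_num) _
  have hE0 : (0:ℝ) ≤ E := by positivity
  -- bound each piece
  have hpiece : ∀ j : ℕ, (∫⁻ z in A j, ENNReal.ofReal ((1 - ‖z‖ ^ 2) ^ α) ∂volume)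
      ≤ ENNReal.ofReal (E * ρ ^ j) * V := by
    intro j
    have hpj : (0:ℝ) < (2⁻¹:ℝ) ^ (j+1) := by positivity
    have hpj1 : (2⁻¹:ℝ) ^ (j+1) ≤ 1 := by
      apply pow_le_one₀ (by norm_num) (by norm_num)
    set B : ℝ := max (((2⁻¹:ℝ) ^ (j+1)) ^ α) 1 with hB
    have hB0 : (0:ℝ) ≤ B := le_trans zero_le_one (le_max_right _ _)
    have hpt : ∀ z ∈ A j, ENNReal.ofReal ((1 - ‖z‖ ^ 2) ^ α) ≤ ENNReal.ofReal B := by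
      intro z hzA
      obtain ⟨hz1, hz2⟩ := hzA
      have hzn0 : (0:ℝ) ≤ ‖z‖ := norm_nonneg z
      have hznorm1 : ‖z‖ < 1 := by nlinarith
      have hlow : (2⁻¹:ℝ) ^ (j+1) < 1 - ‖z‖ ^ 2 := by nlinarith
      apply ENNReal.ofReal_le_ofReal
      rcases le_or_gt 0 α with hα0 | hα0
      · refine le_trans ?_ (le_max_right _ _)
        have h := Real.rpow_le_rpow (by nlinarith) (by nlinarith : 1 - ‖z‖ ^ 2 ≤ 1) hα0
        simpa using h
      · refine le_trans ?_ (le_max_left _ _)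
        exact Real.rpow_le_rpow_of_nonpos hpj hlow.le hα0.le
    -- measure of the annulus
    have hr₁0 : (0:ℝ) ≤ 1 - (2⁻¹:ℝ)^j := by
      have : (2⁻¹:ℝ)^j ≤ 1 := pow_le_one₀ (by norm_num) (by norm_num)
      linarith
    have hmb : volume (A j) ≤ ENNReal.ofReal ((d:ℝ) * (2⁻¹:ℝ)^j) * V := by
      have hsub : A j ⊆ ball (0:En n) 1 \ ball (0:En n) (1 - (2⁻¹:ℝ)^j) := by
        intro z hzA
        obtain ⟨hz1, hz2⟩ := hzA
        have hpj' : (0:ℝ) < (2⁻¹:ℝ) ^ (j+1) := by positivity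
        constructor
        · rw [mem_ball_zero_iff]; nlinarith
        · intro hmem
          rw [mem_ball_zero_iff] at hmem
          linarith
      have hdiffeq : volume (ball (0:En n) 1 \ ball (0:En n) (1 - (2⁻¹:ℝ)^j))
          = V - ENNReal.ofReal ((1 - (2⁻¹:ℝ)^j) ^ d) * V := by
        rw [measure_diff (ball_subset_ball (by
            have : (0:ℝ) < (2⁻¹:ℝ)^j := by positivity
            linarith)) measurableSet_ball.nullMeasurableSet measure_ball_lt_top.ne]
        rw [Measure.addHaar_ball _ _ hr₁0]
      calc volume (A j) ≤ volume (ball (0:En n) 1 \ ball (0:En n) (1 - (2⁻¹:ℝ)^j)) :=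
            measure_mono hsub
        _ = V - ENNReal.ofReal ((1 - (2⁻¹:ℝ)^j) ^ d) * V := hdiffeq
        _ = (1 - ENNReal.ofReal ((1 - (2⁻¹:ℝ)^j) ^ d)) * V := by
            rw [ENNReal.sub_mul (fun _ _ => hVt), one_mul]
        _ = ENNReal.ofReal (1 - (1 - (2⁻¹:ℝ)^j) ^ d) * V := by
            rw [ENNReal.ofReal_sub _ (by positivity), ENNReal.ofReal_one]
        _ ≤ ENNReal.ofReal ((d:ℝ) * (2⁻¹:ℝ)^j) * V := by
            gcongr
            have hber := one_add_mul_le_pow (a := -((2⁻¹:ℝ)^j)) (by nlinarith [hr₁0] : (-2:ℝ) ≤ -((2⁻¹:ℝ)^j)) d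
            have : (1:ℝ) - d * (2⁻¹:ℝ)^j ≤ (1 - (2⁻¹:ℝ)^j) ^ d := by
              calc (1:ℝ) - d * (2⁻¹:ℝ)^j = 1 + d * (-((2⁻¹:ℝ)^j)) := by ring
                _ ≤ (1 + -((2⁻¹:ℝ)^j)) ^ d := hber
                _ = (1 - (2⁻¹:ℝ)^j) ^ d := by ring_nf
            linarith
    -- the key real inequality
    have hkey : B * ((d:ℝ) * (2⁻¹:ℝ)^j) ≤ E * ρ ^ j := by
      have hmax : B ≤ ((2⁻¹:ℝ) ^ (j+1)) ^ α + 1 := by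
        apply max_le
        · nlinarith [Real.rpow_nonneg (le_of_lt hpj) α]
        · nlinarith [Real.rpow_nonneg (le_of_lt hpj) α]
      have hconv : ((2⁻¹:ℝ) ^ (j+1)) ^ α = ((2⁻¹:ℝ) ^ (α:ℝ)) ^ (j+1) := by
        rw [← Real.rpow_natCast (2⁻¹:ℝ) (j+1), ← Real.rpow_mul (by norm_num), mul_comm,
          Real.rpow_mul (by norm_num), Real.rpow_natCast]
      have hsplit : ((2⁻¹:ℝ) ^ (α:ℝ)) ^ (j+1) * (2⁻¹:ℝ)^j
          = (2⁻¹:ℝ) ^ (α:ℝ) * ((2⁻¹:ℝ) ^ (α+1)) ^ j := by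
        rw [pow_succ']
        have : ((2⁻¹:ℝ) ^ (α+1)) = (2⁻¹:ℝ) ^ (α:ℝ) * 2⁻¹ := by
          rw [Real.rpow_add (by norm_num), Real.rpow_one]
        rw [this, mul_pow]
        ring
      have hle1 : ((2⁻¹:ℝ) ^ (α+1)) ^ j ≤ ρ ^ j :=
        pow_le_pow_left₀ (Real.rpow_nonneg (by norm_num) _) (le_max_left _ _) j
      have hle2 : ((2⁻¹:ℝ)) ^ j ≤ ρ ^ j :=
        pow_le_pow_left₀ (by norm_num) (le_max_right _ _) j
      calc B * ((d:ℝ) * (2⁻¹:ℝ)^j) ≤ (((2⁻¹:ℝ) ^ (j+1)) ^ α + 1) * ((d:ℝ) * (2⁻¹:ℝ)^j) := by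
            apply mul_le_mul_of_nonneg_right hmax (by positivity)
        _ = (d:ℝ) * (((2⁻¹:ℝ) ^ (j+1)) ^ α * (2⁻¹:ℝ)^j) + (d:ℝ) * (2⁻¹:ℝ)^j := by ring
        _ = (d:ℝ) * ((2⁻¹:ℝ) ^ (α:ℝ) * ((2⁻¹:ℝ) ^ (α+1)) ^ j) + (d:ℝ) * (2⁻¹:ℝ)^j := by
            rw [hconv, hsplit]
        _ ≤ (d:ℝ) * ((2⁻¹:ℝ) ^ (α:ℝ) * ρ ^ j) + (d:ℝ) * ρ ^ j := by
            have t1 : (2⁻¹:ℝ) ^ (α:ℝ) * ((2⁻¹:ℝ) ^ (α+1)) ^ j ≤ (2⁻¹:ℝ) ^ (α:ℝ) * ρ ^ j :=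
              mul_le_mul_of_nonneg_left hle1 h2a.le
            have t2 : ((2⁻¹:ℝ)) ^ j ≤ ρ ^ j := hle2
            have hd0' : (0:ℝ) ≤ d := Nat.cast_nonneg d
            nlinarith
        _ = E * ρ ^ j := by rw [hE]; ring
    calc (∫⁻ z in A j, ENNReal.ofReal ((1 - ‖z‖ ^ 2) ^ α) ∂volume)
        ≤ ∫⁻ _ in A j, ENNReal.ofReal B ∂volume := setLIntegral_mono' (hmeasA j) hpt
      _ = ENNReal.ofReal B * volume (A j) := setLIntegral_const _ _
      _ ≤ ENNReal.ofReal B * (ENNReal.ofReal ((d:ℝ) * (2⁻¹:ℝ)^j) * V) := by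
          exact mul_le_mul_right hmb _
      _ = ENNReal.ofReal (B * ((d:ℝ) * (2⁻¹:ℝ)^j)) * V := by
          rw [ENNReal.ofReal_mul hB0, mul_assoc]
      _ ≤ ENNReal.ofReal (E * ρ ^ j) * V := by
          exact mul_le_mul_left (ENNReal.ofReal_le_ofReal hkey) _
  -- sum up
  calc (∫⁻ z in ball (0:En n) 1, ENNReal.ofReal ((1 - ‖z‖ ^ 2) ^ α) ∂volume)
      ≤ ∫⁻ z in ⋃ j, A j, ENNReal.ofReal ((1 - ‖z‖ ^ 2) ^ α) ∂volume :=
        lintegral_mono_set hcover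
    _ ≤ ∑' j, ∫⁻ z in A j, ENNReal.ofReal ((1 - ‖z‖ ^ 2) ^ α) ∂volume :=
        lintegral_iUnion_le _ _
    _ ≤ ∑' j, ENNReal.ofReal (E * ρ ^ j) * V := ENNReal.tsum_le_tsum hpiece
    _ = (∑' j : ℕ, ENNReal.ofReal E * (ENNReal.ofReal ρ) ^ j) * V := by
        rw [← ENNReal.tsum_mul_right]
        congr 1
        funext j
        rw [ENNReal.ofReal_mul hE0, ENNReal.ofReal_pow hρ0]
    _ = ENNReal.ofReal E * (1 - ENNReal.ofReal ρ)⁻¹ * V := by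
        rw [ENNReal.tsum_mul_left, ENNReal.tsum_geometric]
    _ < ⊤ := by
        apply ENNReal.mul_lt_top _ hVt.lt_top
        apply ENNReal.mul_lt_top ENNReal.ofReal_lt_top
        rw [ENNReal.inv_lt_top]
        rw [tsub_pos_iff_lt]
        exact ENNReal.ofReal_lt_one.2 hρ1


end Stmt17

/-- if U_φ is bounded on B_p^σ(B) then φ is bounded. -/
theorem stmt_17 (n : ℕ) (p σ : ℝ) (hp : 1 < p) (hσ : 0 ≤ σ)
    (hn : (n : ℝ) / p < 1 + σ) (φ : En n → ℂ)
    (hφ : DifferentiableOn ℂ φ (Metric.ball (0 : En n) 1))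
    (hb : ∃ C : ℝ, 0 < C ∧ ∀ f : En n → ℂ,
      DifferentiableOn ℂ f (Metric.ball (0 : En n) 1) → besov1 p σ f ≠ ⊤ →
        besov1 p σ (Uop φ f) ≤ ENNReal.ofReal C * besov1 p σ f) :
    ∃ K : ℝ, ∀ z ∈ Metric.ball (0 : En n) 1, ‖φ z‖ ≤ K := by
  classical
  obtain ⟨C, hC, hbb⟩ := hb
  rcases Nat.eq_zero_or_pos n with rfl | hn0
  · refine ⟨‖φ 0‖, fun z _ => ?_⟩
    have hz0 : z = 0 := Subsingleton.elim z 0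
    rw [hz0]
  set i : Fin n := ⟨0, hn0⟩ with hi
  have hp0 : (0:ℝ) < p := lt_trans one_pos hp
  have hα1 : (-1:ℝ) < (1 + σ) * p - n - 1 := by
    have hnp : (n:ℝ) < (1+σ)*p := by
      rw [div_lt_iff₀ hp0] at hn
      linarith
    linarith
  have hcoord : ∀ z : En n, ‖z i‖ ≤ ‖z‖ := by
    intro z
    rw [EuclideanSpace.norm_eq]
    have h1 : ‖z i‖ = Real.sqrt (‖z i‖^2) := (Real.sqrt_sq (norm_nonneg _)).symm
    rw [h1]
    apply Real.sqrt_le_sqrt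
    exact Finset.single_le_sum (f := fun j => ‖z j‖^2) (fun j _ => sq_nonneg _)
      (Finset.mem_univ i)
  -- explicit formula for the Besov seminorm of the test functions
  have hbes : ∀ k : ℕ, besov1 p σ (Stmt17.Ff φ i k)
      = ∫⁻ z in ball (0:En n) 1,
          ENNReal.ofReal ((‖z i * (φ z)^k‖) ^ p
            * (1 - ‖z‖ ^ 2) ^ ((1 + σ) * p - n - 1)) ∂volume := by
    intro k
    unfold besov1
    apply setLIntegral_congr_fun measurableSet_ball
    intro z hz
    beta_reduce
    rw [Stmt17.radialF φ hφ i k z hz]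
  have hb0fin : besov1 p σ (Stmt17.Ff φ i 0) ≠ ⊤ := by
    rw [hbes 0]
    refine ne_top_of_le_ne_top (Stmt17.weight_lt_top hn0 hα1).ne ?_
    apply setLIntegral_mono' measurableSet_ball
    intro z hz
    apply ENNReal.ofReal_le_ofReal
    have h1 : ‖z i * (φ z)^0‖ ≤ 1 := by
      simp only [pow_zero, mul_one]
      calc ‖z i‖ = ‖z i‖ := rfl
        _ ≤ ‖z‖ := hcoord z
        _ ≤ 1 := (mem_ball_zero_iff.1 hz).le
    have h2 : ‖z i * (φ z)^0‖ ^ p ≤ 1 :=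
      Real.rpow_le_one (norm_nonneg _) h1 hp0.le
    have hzn1 : ‖z‖ < 1 := mem_ball_zero_iff.1 hz
    have hw : (0:ℝ) ≤ (1 - ‖z‖ ^ 2) ^ ((1+σ)*p - n - 1) :=
      Real.rpow_nonneg (by nlinarith [norm_nonneg z]) _
    calc ‖z i * (φ z)^0‖ ^ p * (1 - ‖z‖ ^ 2) ^ ((1+σ)*p - n - 1)
        ≤ 1 * (1 - ‖z‖ ^ 2) ^ ((1+σ)*p - n - 1) := mul_le_mul_of_nonneg_right h2 hw
      _ = (1 - ‖z‖ ^ 2) ^ ((1+σ)*p - n - 1) := one_mul _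
  have hUeq : ∀ k : ℕ, besov1 p σ (Uop φ (Stmt17.Ff φ i k))
      = besov1 p σ (Stmt17.Ff φ i (k+1)) := by
    intro k
    unfold besov1
    apply setLIntegral_congr_fun measurableSet_ball
    intro z hz
    have heqOn : Set.EqOn (Uop φ (Stmt17.Ff φ i k)) (Stmt17.Ff φ i (k+1)) (ball (0:En n) 1) :=
      fun y hy => Stmt17.UopF φ hφ i k y hy
    have hev : Uop φ (Stmt17.Ff φ i k) =ᶠ[nhds z] Stmt17.Ff φ i (k+1) :=
      Filter.eventuallyEq_of_mem (isOpen_ball.mem_nhds hz) heqOn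
    unfold radialDeriv
    beta_reduce
    rw [hev.fderiv_eq]
  have hdiffOn : ∀ k : ℕ, DifferentiableOn ℂ (Stmt17.Ff φ i k) (ball (0:En n) 1) :=
    fun k z hz => (Stmt17.diffF φ hφ i k z hz).differentiableWithinAt
  have hind : ∀ k : ℕ, besov1 p σ (Stmt17.Ff φ i k)
      ≤ (ENNReal.ofReal C)^k * besov1 p σ (Stmt17.Ff φ i 0)
      ∧ besov1 p σ (Stmt17.Ff φ i k) ≠ ⊤ := by
    intro k
    induction k with
    | zero => exact ⟨by simp, hb0fin⟩
    | succ k ih =>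
      have h1 : besov1 p σ (Uop φ (Stmt17.Ff φ i k))
          ≤ ENNReal.ofReal C * besov1 p σ (Stmt17.Ff φ i k) :=
        hbb _ (hdiffOn k) ih.2
      rw [hUeq k] at h1
      constructor
      · calc besov1 p σ (Stmt17.Ff φ i (k+1))
            ≤ ENNReal.ofReal C * besov1 p σ (Stmt17.Ff φ i k) := h1
          _ ≤ ENNReal.ofReal C * ((ENNReal.ofReal C)^k * besov1 p σ (Stmt17.Ff φ i 0)) :=
              mul_le_mul_right ih.1 _
          _ = (ENNReal.ofReal C)^(k+1) * besov1 p σ (Stmt17.Ff φ i 0) := by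
              rw [pow_succ, mul_comm ((ENNReal.ofReal C)^k) (ENNReal.ofReal C), mul_assoc]
      · exact ne_top_of_le_ne_top (ENNReal.mul_ne_top ENNReal.ofReal_ne_top ih.2) h1
  -- suppose φ is unbounded, derive a contradiction
  by_contra hKc
  push_neg at hKc
  obtain ⟨z₁, hz₁, hz₁K⟩ := hKc (C ^ (1/p : ℝ))
  have hK0 : (0:ℝ) < C ^ (1/p : ℝ) := Real.rpow_pos_of_pos hC _
  have hcamain : ContinuousAt φ z₁ := hφ.continuousOn.continuousAt (isOpen_ball.mem_nhds hz₁)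
  have hev : ∀ᶠ y in nhds z₁, y ∈ ball (0:En n) 1 ∧ C ^ (1/p : ℝ) < ‖φ y‖ := by
    apply Filter.Eventually.and
    · exact Filter.eventually_of_mem (isOpen_ball.mem_nhds hz₁) (fun y hy => hy)
    · have hcc : ContinuousAt (fun y : En n => ‖φ y‖) z₁ :=
        (continuous_norm.continuousAt).comp hcamain
      exact hcc.eventually (eventually_gt_nhds hz₁K)
  obtain ⟨δ, hδ0, hδ⟩ := Metric.eventually_nhds_iff.1 hev
  -- pick a point w near z₁ with w i ≠ 0
  have hwex : ∃ w : En n, w ∈ ball (0:En n) 1 ∧ C ^ (1/p : ℝ) < ‖φ w‖ ∧ w i ≠ 0 := by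
    by_cases hzi : z₁ i = 0
    · set w : En n := z₁ + (δ/2) • EuclideanSpace.single i (1:ℂ) with hwdef
      have hdist : dist w z₁ < δ := by
        rw [dist_eq_norm, hwdef]
        simp only [add_sub_cancel_left]
        rw [norm_smul, EuclideanSpace.norm_single]
        rw [Real.norm_eq_abs, abs_of_pos (by linarith), norm_one, mul_one]
        linarith
      have hwp := hδ hdist
      refine ⟨w, hwp.1, hwp.2, ?_⟩
      rw [hwdef]
      have : (z₁ + (δ/2) • EuclideanSpace.single i (1:ℂ)) i
          = z₁ i + (δ/2 : ℝ) • (EuclideanSpace.single i (1:ℂ) i) := by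
        simp [PiLp.add_apply, PiLp.smul_apply]
      rw [this, hzi, EuclideanSpace.single_apply, if_pos rfl, zero_add]
      simp only [Complex.real_smul, mul_one]
      intro hcontra
      have : (δ/2 : ℝ) = 0 := by exact_mod_cast hcontra
      linarith
    · exact ⟨z₁, hz₁, hz₁K, hzi⟩
  obtain ⟨w, hwball, hwK, hwi⟩ := hwex
  set m : ℝ := (C ^ (1/p : ℝ) + ‖φ w‖) / 2 with hmdef
  have hKm : C ^ (1/p : ℝ) < m := by rw [hmdef]; linarith
  have hm0 : (0:ℝ) < m := lt_trans hK0 hKm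
  have hmlt : m < ‖φ w‖ := by rw [hmdef]; linarith
  have hwn1 : ‖w‖ < 1 := mem_ball_zero_iff.1 hwball
  set s₁ : ℝ := (1 + ‖w‖)/2 with hs₁def
  have hs₁1 : s₁ < 1 := by rw [hs₁def]; linarith
  have hws₁ : ‖w‖ < s₁ := by rw [hs₁def]; linarith
  have hs₁0 : (0:ℝ) ≤ s₁ := by positivity
  set δ' : ℝ := ‖w i‖ / 2 with hδ'def
  have hδ'0 : (0:ℝ) < δ' := by
    rw [hδ'def]
    have : 0 < ‖w i‖ := norm_pos_iff.2 hwi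
    linarith
  have hev2 : ∀ᶠ y in nhds w, y ∈ ball (0:En n) 1 ∧ m < ‖φ y‖
      ∧ δ' < ‖y i‖ ∧ ‖y‖ < s₁ := by
    have hcw : ContinuousAt φ w := hφ.continuousOn.continuousAt (isOpen_ball.mem_nhds hwball)
    refine Filter.Eventually.and ?_ (Filter.Eventually.and ?_ (Filter.Eventually.and ?_ ?_))
    · exact Filter.eventually_of_mem (isOpen_ball.mem_nhds hwball) (fun y hy => hy)
    · have hcc : ContinuousAt (fun y : En n => ‖φ y‖) w :=
        (continuous_norm.continuousAt).comp hcw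
      exact hcc.eventually (eventually_gt_nhds hmlt)
    · have hcc : ContinuousAt (fun y : En n => ‖y i‖) w := by
        apply Continuous.continuousAt
        exact continuous_norm.comp (EuclideanSpace.proj i : En n →L[ℂ] ℂ).continuous
      apply hcc.eventually
      apply eventually_gt_nhds
      rw [hδ'def]
      have : 0 < ‖w i‖ := norm_pos_iff.2 hwi
      linarith
    · have hcc : ContinuousAt (fun y : En n => ‖y‖) w := continuous_norm.continuousAt
      exact hcc.eventually (eventually_lt_nhds hws₁)
  obtain ⟨r, hr0, hr⟩ := Metric.eventually_nhds_iff.1 hev2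
  have h1s₁ : (0:ℝ) < 1 - s₁^2 := by nlinarith
  set c₀ : ℝ := min ((1 - s₁^2) ^ ((1+σ)*p - n - 1)) 1 with hc₀def
  have hc₀0 : (0:ℝ) < c₀ := lt_min (Real.rpow_pos_of_pos h1s₁ _) one_pos
  -- lower bound for besov1 of the test functions
  have hlower : ∀ k : ℕ, ENNReal.ofReal ((δ' * m^k)^p * c₀) * volume (ball w r)
      ≤ (ENNReal.ofReal C)^k * besov1 p σ (Stmt17.Ff φ i 0) := by
    intro k
    have hsubb : ball w r ⊆ ball (0:En n) 1 := by
      intro y hy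
      exact (hr (mem_ball.1 hy)).1
    calc ENNReal.ofReal ((δ' * m^k)^p * c₀) * volume (ball w r)
        = ∫⁻ _ in ball w r, ENNReal.ofReal ((δ' * m^k)^p * c₀) ∂volume :=
          (setLIntegral_const _ _).symm
      _ ≤ ∫⁻ z in ball w r, ENNReal.ofReal ((‖z i * (φ z)^k‖) ^ p
            * (1 - ‖z‖ ^ 2) ^ ((1 + σ) * p - n - 1)) ∂volume := by
          apply setLIntegral_mono' measurableSet_ball
          intro z hz
          obtain ⟨hzb, hzm, hzi, hzn⟩ := hr (mem_ball.1 hz)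
          apply ENNReal.ofReal_le_ofReal
          have hzn1 : ‖z‖ < 1 := mem_ball_zero_iff.1 hzb
          have habs : δ' * m^k ≤ ‖z i * (φ z)^k‖ := by
            rw [norm_mul, norm_pow]
            apply mul_le_mul hzi.le (pow_le_pow_left₀ hm0.le hzm.le k)
              (pow_nonneg hm0.le k) (norm_nonneg _)
          have hwt : c₀ ≤ (1 - ‖z‖ ^ 2) ^ ((1+σ)*p - n - 1) := by
            have hzs : ‖z‖^2 < s₁^2 := by nlinarith [norm_nonneg z]
            rcases le_or_gt 0 ((1+σ)*p - n - 1) with hα0 | hα0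
            · refine le_trans (min_le_left _ _) ?_
              apply Real.rpow_le_rpow h1s₁.le (by linarith) hα0
            · refine le_trans (min_le_right _ _) ?_
              apply Real.one_le_rpow_of_pos_of_le_one_of_nonpos
              · nlinarith
              · nlinarith [norm_nonneg z]
              · exact hα0.le
          exact mul_le_mul (Real.rpow_le_rpow (by positivity) habs hp0.le) hwt hc₀0.le
            (Real.rpow_nonneg (norm_nonneg _) p)
      _ ≤ ∫⁻ z in ball (0:En n) 1, ENNReal.ofReal ((‖z i * (φ z)^k‖) ^ p
            * (1 - ‖z‖ ^ 2) ^ ((1 + σ) * p - n - 1)) ∂volume := lintegral_mono_set hsubb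
      _ = besov1 p σ (Stmt17.Ff φ i k) := (hbes k).symm
      _ ≤ (ENNReal.ofReal C)^k * besov1 p σ (Stmt17.Ff φ i 0) := (hind k).1
  set B : ℝ := (besov1 p σ (Stmt17.Ff φ i 0)).toReal with hBdef
  set Vr : ℝ := (volume (ball w r)).toReal with hVrdef
  have hVr0 : (0:ℝ) < Vr := by
    rw [hVrdef]
    exact ENNReal.toReal_pos (measure_ball_pos _ _ hr0).ne' measure_ball_lt_top.ne
  have hreal : ∀ k : ℕ, (δ' * m^k)^p * c₀ * Vr ≤ C^k * B := by
    intro k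
    have h := hlower k
    have hrhs_ne : (ENNReal.ofReal C)^k * besov1 p σ (Stmt17.Ff φ i 0) ≠ ⊤ :=
      ENNReal.mul_ne_top (ENNReal.pow_ne_top ENNReal.ofReal_ne_top) hb0fin
    have h2 := ENNReal.toReal_mono hrhs_ne h
    rw [ENNReal.toReal_mul, ENNReal.toReal_ofReal (by positivity)] at h2
    rw [ENNReal.toReal_mul, ENNReal.toReal_pow, ENNReal.toReal_ofReal hC.le] at h2
    exact h2
  have hmp : C < m^p := by
    have h := Real.rpow_lt_rpow hK0.le hKm hp0
    rwa [← Real.rpow_mul hC.le, one_div, inv_mul_cancel₀ hp0.ne', Real.rpow_one] at h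
  have hq0 : (0:ℝ) < δ'^p * c₀ * Vr := by
    have : (0:ℝ) < δ'^p := Real.rpow_pos_of_pos hδ'0 p
    positivity
  have hexp : ∀ k : ℕ, (δ' * m^k)^p = δ'^p * (m^p)^k := by
    intro k
    rw [Real.mul_rpow hδ'0.le (pow_nonneg hm0.le k)]
    congr 1
    rw [← Real.rpow_natCast m k, ← Real.rpow_mul hm0.le, mul_comm,
      Real.rpow_mul hm0.le, Real.rpow_natCast]
  have hgeom : ∀ k : ℕ, (m^p / C)^k ≤ B / (δ'^p * c₀ * Vr) := by
    intro k
    have h := hreal k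
    rw [hexp k] at h
    rw [div_pow, div_le_div_iff₀ (pow_pos hC k) hq0]
    nlinarith [h]
  obtain ⟨k, hk⟩ := pow_unbounded_of_one_lt (B / (δ'^p * c₀ * Vr)) ((one_lt_div hC).2 hmp)
  exact absurd (hgeom k) (not_le.2 hk)
end
end
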